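/- Let H be a complex Hilbert space and let d, Q, R, K be bounded linear operators on H such that d ∘ d = 0, K is compact, ‖R‖ < 1, and Q d + d Q = Id + R + K. Then the range of d is a closed subspace of H and the quotient vector space ker d / ran d is finite-dimensional. -/

import Mathlib

open Metric Filter Topology

/-- A subspace on which a compact operator is bounded below is finite dimensional. -/
lemma finiteDimensional_of_compact_bddBelow
    {E F : Type*} [NormedAddCommGroup E] [NormedSpace ℂ E] [CompleteSpace E]
    [NormedAddCommGroup F] [NormedSpace ℂ F]
    (S : E →L[ℂ] F) (hS : IsCompactOperator ⇑S)
    (N : Submodule ℂ E) (hN : IsClosed (N : Set E))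
    {c : ℝ} (hc : 0 < c) (hb : ∀ y ∈ N, c * ‖y‖ ≤ ‖S y‖) :
    FiniteDimensional ℂ ↥N := by
  haveI : CompleteSpace ↥N := hN.completeSpace_coe
  set f : ↥N →L[ℂ] F := S.comp N.subtypeL with hf
  have hbf : ∀ x : ↥N, ‖x‖ ≤ (⟨c, hc.le⟩ : NNReal)⁻¹ * ‖f x‖ := by
    intro x
    have h1 := hb x x.2
    have h2 : ‖x‖ ≤ c⁻¹ * ‖f x‖ := by
      rw [← div_eq_inv_mul, le_div_iff₀ hc, mul_comm]
      simpa [hf] using h1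
    simpa using h2
  have hanti := f.antilipschitz_of_bound hbf
  have hemb : IsClosedEmbedding f := hanti.isClosedEmbedding f.uniformContinuous
  have hC : IsCompact (closure (⇑S '' closedBall 0 1)) :=
    hS.isCompact_closure_image_closedBall (𝕜₁ := ℂ) (f := (S : E →ₗ[ℂ] F)) 1
  apply FiniteDimensional.of_isCompact_closedBall₀ ℂ (zero_lt_one (α := ℝ))
  rw [hemb.isEmbedding.isCompact_iff]
  apply hC.of_isClosed_subset (hemb.isClosedMap _ isClosed_closedBall)
  rintro - ⟨x, hx, rfl⟩
  apply subset_closure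
  refine ⟨(x : E), ?_, rfl⟩
  simpa [mem_closedBall, dist_eq_norm] using (mem_closedBall_zero_iff.1 hx)

/-- Key lemma: if `1 = A + U + S` on a Hilbert space with `‖U‖ < 1` and `S` compact,
then `A` has closed range of finite codimension. -/
lemma closed_range_finite_codim
    {E : Type*} [NormedAddCommGroup E] [InnerProductSpace ℂ E] [CompleteSpace E]
    (A U S : E →L[ℂ] E) (hU : ‖U‖ < 1) (hS : IsCompactOperator ⇑S)
    (hid : ∀ y, y = A y + U y + S y) :
    IsClosed ((LinearMap.range (A : E →ₗ[ℂ] E) : Submodule ℂ E) : Set E) ∧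
      ∃ G : Submodule ℂ E, FiniteDimensional ℂ ↥G ∧ (LinearMap.range (A : E →ₗ[ℂ] E) : Submodule ℂ E) ⊔ G = ⊤ := by
  have hc1 : (0:ℝ) < 1 - ‖U‖ := by linarith
  -- the kernel of A is finite dimensional
  set N : Submodule ℂ E := LinearMap.ker (A : E →ₗ[ℂ] E) with hNdef
  have hNclosed : IsClosed (N : Set E) := ContinuousLinearMap.isClosed_ker A
  have hbN : ∀ y ∈ N, (1 - ‖U‖) * ‖y‖ ≤ ‖S y‖ := by
    intro y hy
    have hy0 : A y = 0 := hy
    have h1 : S y = y - U y := by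
      have h := hid y
      rw [hy0, zero_add] at h
      exact eq_sub_of_add_eq' h.symm
    have h2 : ‖y‖ - ‖U y‖ ≤ ‖S y‖ := by
      rw [h1]; exact norm_sub_norm_le _ _
    have h3 : ‖U y‖ ≤ ‖U‖ * ‖y‖ := U.le_opNorm y
    nlinarith [norm_nonneg y]
  haveI hNfd : FiniteDimensional ℂ ↥N :=
    finiteDimensional_of_compact_bddBelow S hS N hNclosed hc1 hbN
  -- A is bounded below on the orthogonal complement of its kernel
  haveI : CompleteSpace ↥N := hNclosed.completeSpace_coe
  have hsupN : N ⊔ Nᗮ = ⊤ := Submodule.sup_orthogonal_of_hasOrthogonalProjection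
  have hWclosed : IsClosed ((Nᗮ : Submodule ℂ E) : Set E) := N.isClosed_orthogonal
  have hC : IsCompact (closure (⇑S '' closedBall 0 1)) :=
    hS.isCompact_closure_image_closedBall (𝕜₁ := ℂ) (f := (S : E →ₗ[ℂ] E)) 1
  have hbdd : ∃ c : ℝ, 0 < c ∧ ∀ w ∈ Nᗮ, c * ‖w‖ ≤ ‖A w‖ := by
    by_contra hcon
    push_neg at hcon
    have hseq : ∀ n : ℕ, ∃ v : E, v ∈ Nᗮ ∧ ‖v‖ = 1 ∧ ‖A v‖ < 1 / (n + 1) := by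
      intro n
      obtain ⟨w, hwW, hw⟩ := hcon (1 / (n + 1)) (by positivity)
      have hw0 : w ≠ 0 := by
        rintro rfl
        simp at hw
      refine ⟨‖w‖⁻¹ • w, Nᗮ.smul_mem _ hwW, ?_, ?_⟩
      · rw [norm_smul, norm_inv, norm_norm, inv_mul_cancel₀ (norm_ne_zero_iff.2 hw0)]
      · rw [A.map_smul_of_tower, norm_smul, norm_inv, norm_norm,
          inv_mul_lt_iff₀ (norm_pos_iff.2 hw0)]
        exact hw.trans_eq (mul_comm _ _)
    choose v hvW hvnorm hvA using hseq
    have hAv : Filter.Tendsto (fun n => A (v n)) Filter.atTop (nhds 0) := by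
      rw [tendsto_zero_iff_norm_tendsto_zero]
      apply squeeze_zero (fun n => norm_nonneg _) (fun n => (hvA n).le)
      exact tendsto_one_div_add_atTop_nhds_zero_nat
    have hmem : ∀ n, S (v n) ∈ closure (⇑S '' closedBall 0 1) := fun n =>
      subset_closure ⟨v n, by simp [hvnorm n], rfl⟩
    obtain ⟨z, _, φ, hφ, hSz⟩ := hC.tendsto_subseq hmem
    set e : (E →L[ℂ] E)ˣ := Units.oneSub U hU with he
    have hval : ∀ y : E, (e : E →L[ℂ] E) y = A y + S y := by
      intro y
      have h0 : (e : E →L[ℂ] E) y = y - U y := by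
        simp [he, Units.oneSub, ContinuousLinearMap.sub_apply]
      rw [h0, sub_eq_iff_eq_add]
      calc y = A y + U y + S y := hid y
        _ = A y + S y + U y := by abel
    have hvconv : Filter.Tendsto (fun n => v (φ n)) Filter.atTop
        (nhds (((e⁻¹ : (E →L[ℂ] E)ˣ) : E →L[ℂ] E) z)) := by
      have h1 : Filter.Tendsto (fun n => A (v (φ n)) + S (v (φ n))) Filter.atTop
          (nhds (0 + z)) := ((hAv.comp hφ.tendsto_atTop).add hSz)
      rw [zero_add] at h1
      have h2 := (((e⁻¹ : (E →L[ℂ] E)ˣ) : E →L[ℂ] E).continuous.tendsto z).comp h1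
      convert h2 using 1
      ext n
      simp only [Function.comp_apply, ← hval]
      have : ∀ y : E, ((e⁻¹ : (E →L[ℂ] E)ˣ) : E →L[ℂ] E) ((e : E →L[ℂ] E) y) = y := by
        intro y
        have h3 : ((e⁻¹ : (E →L[ℂ] E)ˣ) : E →L[ℂ] E) * (e : E →L[ℂ] E) = 1 := by
          rw [← Units.val_mul, inv_mul_cancel e, Units.val_one]
        calc ((e⁻¹ : (E →L[ℂ] E)ˣ) : E →L[ℂ] E) ((e : E →L[ℂ] E) y)
            = (((e⁻¹ : (E →L[ℂ] E)ˣ) : E →L[ℂ] E) * (e : E →L[ℂ] E)) y := rfl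
          _ = y := by rw [h3]; rfl
      exact (this _).symm
    set w : E := ((e⁻¹ : (E →L[ℂ] E)ˣ) : E →L[ℂ] E) z with hw
    have hwW : w ∈ Nᗮ := hWclosed.mem_of_tendsto hvconv
      (Filter.Eventually.of_forall fun n => hvW (φ n))
    have hwnorm : ‖w‖ = 1 := by
      have := (continuous_norm.tendsto w).comp hvconv
      have h2 : Filter.Tendsto (fun n => ‖v (φ n)‖) Filter.atTop (nhds 1) := by
        simpa [hvnorm] using tendsto_const_nhds (α := ℝ) (x := 1) (f := Filter.atTop (α := ℕ))
      exact tendsto_nhds_unique this h2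
    have hwA : A w = 0 := by
      have h1 := (A.continuous.tendsto w).comp hvconv
      have h2 : Filter.Tendsto (fun n => A (v (φ n))) Filter.atTop (nhds 0) :=
        hAv.comp hφ.tendsto_atTop
      exact tendsto_nhds_unique (by simpa [Function.comp_def] using h1) h2
    have : w = 0 := by
      have h1 : w ∈ N ⊓ Nᗮ := ⟨hwA, hwW⟩
      rwa [N.orthogonal_disjoint.eq_bot, Submodule.mem_bot] at h1
    rw [this, norm_zero] at hwnorm
    norm_num at hwnorm
  -- hence the range of A is closed
  obtain ⟨c, hc, hb⟩ := hbdd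
  haveI : CompleteSpace ↥(Nᗮ) := hWclosed.completeSpace_coe
  set f : ↥(Nᗮ) →L[ℂ] E := A.comp (Nᗮ).subtypeL with hfdef
  have hbf : ∀ x : ↥(Nᗮ), ‖x‖ ≤ c⁻¹ * ‖f x‖ := by
    intro x
    rw [← div_eq_inv_mul, le_div_iff₀ hc, mul_comm]
    simpa [hfdef] using hb x x.2
  have hanti := f.antilipschitz_of_bound (K := (⟨c, hc.le⟩ : NNReal)⁻¹) (fun x => (hbf x).trans_eq (by rfl))
  have hemb : IsClosedEmbedding f := hanti.isClosedEmbedding f.uniformContinuous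
  have hrange : ((LinearMap.range (A : E →ₗ[ℂ] E) : Submodule ℂ E) : Set E) = Set.range ⇑f := by
    apply Set.Subset.antisymm
    · rintro - ⟨y, rfl⟩
      have hy : y ∈ N ⊔ Nᗮ := hsupN ▸ Submodule.mem_top
      obtain ⟨n, hn, x, hx, rfl⟩ := Submodule.mem_sup.1 hy
      refine ⟨⟨x, hx⟩, ?_⟩
      have hn0 : A n = 0 := hn
      simp [hfdef, map_add, hn0]
    · rintro - ⟨x, rfl⟩
      exact ⟨(x : E), rfl⟩
  have hclosed : IsClosed ((LinearMap.range (A : E →ₗ[ℂ] E) : Submodule ℂ E) : Set E) := by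
    rw [hrange]; exact hemb.isClosed_range
  refine ⟨hclosed, (LinearMap.range (A : E →ₗ[ℂ] E))ᗮ, ?_, ?_⟩
  · -- finite dimensionality of the orthogonal complement of the range
    apply finiteDimensional_of_compact_bddBelow S hS _ (LinearMap.range (A : E →ₗ[ℂ] E)).isClosed_orthogonal hc1
    intro y hy
    have hinner : inner ℂ (A y) y = (0 : ℂ) :=
      (Submodule.mem_orthogonal _ y).1 hy (A y) ⟨y, rfl⟩
    have h1 : ‖y‖ ^ 2 = RCLike.re (inner ℂ y y : ℂ) := by
      rw [← inner_self_eq_norm_sq (𝕜 := ℂ)]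
    have h2 : (inner ℂ y y : ℂ) = inner ℂ (U y) y + inner ℂ (S y) y := by
      calc (inner ℂ y y : ℂ) = inner ℂ (A y + U y + S y) y := by rw [← hid y]
        _ = inner ℂ (A y) y + inner ℂ (U y) y + inner ℂ (S y) y := by
            rw [inner_add_left, inner_add_left]
        _ = inner ℂ (U y) y + inner ℂ (S y) y := by rw [hinner, zero_add]
    have h3 : RCLike.re (inner ℂ (U y) y : ℂ) ≤ ‖U‖ * ‖y‖ * ‖y‖ := by
      calc RCLike.re (inner ℂ (U y) y : ℂ) ≤ ‖(inner ℂ (U y) y : ℂ)‖ := RCLike.re_le_norm _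
        _ ≤ ‖U y‖ * ‖y‖ := norm_inner_le_norm _ _
        _ ≤ ‖U‖ * ‖y‖ * ‖y‖ := by
            have := U.le_opNorm y
            nlinarith [norm_nonneg y]
    have h4 : RCLike.re (inner ℂ (S y) y : ℂ) ≤ ‖S y‖ * ‖y‖ := by
      calc RCLike.re (inner ℂ (S y) y : ℂ) ≤ ‖(inner ℂ (S y) y : ℂ)‖ := RCLike.re_le_norm _
        _ ≤ ‖S y‖ * ‖y‖ := norm_inner_le_norm _ _
    have h5 : ‖y‖ ^ 2 ≤ ‖U‖ * ‖y‖ * ‖y‖ + ‖S y‖ * ‖y‖ := by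
      rw [h1, h2, map_add]; linarith
    rcases eq_or_lt_of_le (norm_nonneg y) with hy0 | hy0
    · rw [← hy0, mul_zero]; exact norm_nonneg (S y)
    · have h6 : (1 - ‖U‖) * ‖y‖ * ‖y‖ ≤ ‖S y‖ * ‖y‖ := by
        have h7 : (1 - ‖U‖) * ‖y‖ * ‖y‖ = ‖y‖ ^ 2 - ‖U‖ * ‖y‖ * ‖y‖ := by ring
        linarith
      exact le_of_mul_le_mul_right h6 hy0
  · haveI : CompleteSpace ↥(LinearMap.range (A : E →ₗ[ℂ] E) : Submodule ℂ E) := hclosed.completeSpace_coe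
    exact Submodule.sup_orthogonal_of_hasOrthogonalProjection

/-- The sum of a closed submodule and a finite-dimensional submodule is closed. -/
lemma isClosed_coe_sup_of_finiteDimensional
    {E : Type*} [NormedAddCommGroup E] [NormedSpace ℂ E]
    (s t : Submodule ℂ E) (hs : IsClosed (s : Set E)) [FiniteDimensional ℂ ↥t] :
    IsClosed ((s ⊔ t : Submodule ℂ E) : Set E) := by
  haveI : IsClosed (s : Set E) := hs
  have hcont : Continuous s.mkQ := AddMonoidHomClass.continuous_of_bound s.mkQ 1 fun x => by
    simpa using Submodule.Quotient.norm_mk_le s x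
  have h1 : ((s ⊔ t : Submodule ℂ E) : Set E)
      = s.mkQ ⁻¹' ((Submodule.map s.mkQ t : Submodule ℂ (E ⧸ s)) : Set (E ⧸ s)) := by
    rw [← Submodule.comap_map_mkQ s t]; rfl
  haveI : FiniteDimensional ℂ ↥(Submodule.map s.mkQ t : Submodule ℂ (E ⧸ s)) :=
    Module.Finite.map t s.mkQ
  rw [h1]
  exact (Submodule.map s.mkQ t).closed_of_finiteDimensional.preimage hcont

set_option maxHeartbeats 1000000 in
/-- Let `H` be a complex Hilbert space and `d, Q, R, K` bounded
operators on `H` with `d ∘ d = 0`, `K` compact, `‖R‖ < 1` and `Q d + d Q = Id + R + K`.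
Then the range of `d` is closed and `ker d / ran d` is finite-dimensional. -/
theorem range_closed_and_cohomology_finiteDimensional_of_parametrix
    {H : Type*} [NormedAddCommGroup H] [InnerProductSpace ℂ H] [CompleteSpace H]
    (d Q R K : H →L[ℂ] H)
    (hd : d.comp d = 0)
    (hK : IsCompactOperator ⇑K)
    (hR : ‖R‖ < 1)
    (heq : Q.comp d + d.comp Q = ContinuousLinearMap.id ℂ H + R + K) :
    IsClosed (LinearMap.range (d : H →ₗ[ℂ] H) : Set H) ∧
      FiniteDimensional ℂ
        ((↥(LinearMap.ker (d : H →ₗ[ℂ] H))) ⧸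
          (Submodule.comap (LinearMap.ker (d : H →ₗ[ℂ] H)).subtype (LinearMap.range (d : H →ₗ[ℂ] H)))) := by
  set Vs : Submodule ℂ H := LinearMap.ker (d : H →ₗ[ℂ] H) with hVs
  have hVsclosed : IsClosed (Vs : Set H) := ContinuousLinearMap.isClosed_ker d
  haveI : CompleteSpace ↥Vs := hVsclosed.completeSpace_coe
  have hdmem : ∀ x : H, d x ∈ Vs := by
    intro x
    have h0 : (d.comp d) x = (0 : H →L[ℂ] H) x := by rw [hd]
    exact LinearMap.mem_ker.2 (by simpa [ContinuousLinearMap.comp_apply] using h0)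
  set P := Submodule.orthogonalProjectionOnto Vs with hP
  have hPmem : ∀ (z : H), z ∈ Vs → ((P z : ↥Vs) : H) = z := by
    intro z hz
    rw [show z = ((⟨z, hz⟩ : ↥Vs) : H) from rfl]
    rw [Submodule.orthogonalProjectionOnto_mem_subspace_eq_self]
  set A : ↥Vs →L[ℂ] ↥Vs := P.comp ((d.comp Q).comp Vs.subtypeL) with hA
  set U : ↥Vs →L[ℂ] ↥Vs := -(P.comp (R.comp Vs.subtypeL)) with hU
  set S : ↥Vs →L[ℂ] ↥Vs := -(P.comp (K.comp Vs.subtypeL)) with hS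
  have hUnorm : ‖U‖ < 1 := by
    apply lt_of_le_of_lt _ hR
    apply ContinuousLinearMap.opNorm_le_bound _ (norm_nonneg R)
    intro x
    have h1 : ‖P (R ((x : ↥Vs) : H))‖ ≤ ‖P‖ * ‖R ((x : ↥Vs) : H)‖ := P.le_opNorm _
    have h2 : ‖P‖ ≤ 1 := Submodule.orthogonalProjectionOnto_norm_le Vs
    have h3 : ‖R ((x : ↥Vs) : H)‖ ≤ ‖R‖ * ‖x‖ := by
      simpa using R.le_opNorm ((x : ↥Vs) : H)
    have h4 : ‖U x‖ = ‖P (R ((x : ↥Vs) : H))‖ := by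
      rw [hU]
      simp only [ContinuousLinearMap.neg_apply, norm_neg]
      rfl
    rw [h4]
    nlinarith [norm_nonneg (R ((x : ↥Vs) : H)), norm_nonneg (P (R ((x : ↥Vs) : H)))]
  have hScomp : IsCompactOperator ⇑S := by
    rw [hS]
    apply IsCompactOperator.neg
    have h1 : IsCompactOperator (⇑K ∘ ⇑Vs.subtypeL) := hK.comp_clm Vs.subtypeL
    have h2 : IsCompactOperator (⇑P ∘ (⇑K ∘ ⇑Vs.subtypeL)) := h1.continuous_comp P.continuous
    exact h2
  have hid : ∀ y : ↥Vs, y = A y + U y + S y := by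
    intro y
    have hyk : d ((y : ↥Vs) : H) = 0 := y.2
    have h0 := ContinuousLinearMap.ext_iff.1 heq ((y : ↥Vs) : H)
    simp only [ContinuousLinearMap.add_apply, ContinuousLinearMap.comp_apply,
      ContinuousLinearMap.id_apply] at h0
    rw [hyk, map_zero, zero_add] at h0
    have h1 : ((y : ↥Vs) : H) = d (Q ((y : ↥Vs) : H)) - R ((y : ↥Vs) : H)
        - K ((y : ↥Vs) : H) := by rw [h0]; abel
    calc y = P ((y : ↥Vs) : H) := (Submodule.orthogonalProjectionOnto_mem_subspace_eq_self y).symm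
      _ = P (d (Q ((y : ↥Vs) : H)) - R ((y : ↥Vs) : H) - K ((y : ↥Vs) : H)) := by rw [← h1]
      _ = P (d (Q ((y : ↥Vs) : H))) - P (R ((y : ↥Vs) : H)) - P (K ((y : ↥Vs) : H)) := by
          rw [map_sub, map_sub]
      _ = A y + U y + S y := by
          simp only [hA, hU, hS, ContinuousLinearMap.comp_apply,
            ContinuousLinearMap.neg_apply, ContinuousLinearMap.coe_comp',
            Function.comp_apply, Submodule.coe_subtypeL', Submodule.coe_subtype]
          abel
  obtain ⟨hclosedA, G, hGfd, hGsup⟩ := closed_range_finite_codim A U S hUnorm hScomp hid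
  set F : Submodule ℂ ↥Vs := Submodule.comap Vs.subtype (LinearMap.range (d : H →ₗ[ℂ] H)) with hF
  have hAF : LinearMap.range (A : ↥Vs →ₗ[ℂ] ↥Vs) ≤ F := by
    rintro - ⟨y, rfl⟩
    have hco : ((A y : ↥Vs) : H) = d (Q ((y : ↥Vs) : H)) := hPmem _ (hdmem _)
    refine Submodule.mem_comap.2 ?_
    rw [Submodule.coe_subtype, ContinuousLinearMap.coe_coe, hco]
    exact ⟨Q ((y : ↥Vs) : H), rfl⟩
  have hFdecomp : F = LinearMap.range (A : ↥Vs →ₗ[ℂ] ↥Vs) ⊔ (G ⊓ F) := by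
    have h1 := sup_inf_assoc_of_le (y := G) (z := F) hAF
    rw [hGsup, top_inf_eq] at h1
    exact h1
  haveI : FiniteDimensional ℂ ↥(G ⊓ F : Submodule ℂ ↥Vs) :=
    Submodule.finiteDimensional_of_le inf_le_left
  have hFclosed : IsClosed (F : Set ↥Vs) := by
    rw [hFdecomp]
    exact isClosed_coe_sup_of_finiteDimensional _ _ hclosedA
  have hFG : F ⊔ G = ⊤ := by
    rw [eq_top_iff, ← hGsup]
    exact sup_le_sup_right hAF G
  constructor
  · have hset : (LinearMap.range (d : H →ₗ[ℂ] H) : Set H) = ((↑) : ↥Vs → H) '' (F : Set ↥Vs) := by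
      ext x
      constructor
      · rintro ⟨y, rfl⟩
        exact ⟨⟨d y, hdmem y⟩, ⟨y, rfl⟩, rfl⟩
      · rintro ⟨z, hz, rfl⟩
        exact hz
    rw [hset]
    have hiso : Isometry ((↑) : ↥Vs → H) := fun x y => rfl
    exact (hiso.isClosedEmbedding).isClosedMap _ hFclosed
  · apply Module.Finite.of_surjective (F.mkQ.comp G.subtype)
    intro z
    obtain ⟨x, rfl⟩ := F.mkQ_surjective z
    have hx : x ∈ F ⊔ G := by rw [hFG]; trivial
    obtain ⟨u, hu, v, hv, rfl⟩ := Submodule.mem_sup.1 hx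
    refine ⟨⟨v, hv⟩, ?_⟩
    have h1 : F.mkQ u = 0 := by
      rw [Submodule.mkQ_apply, Submodule.Quotient.mk_eq_zero]
      exact hu
    simp [LinearMap.comp_apply, map_add, h1]
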